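/- There is no continuous map F : S¹ × S¹ → S¹ on the unit circle S¹ ⊆ ℝ² that is unanimous (F(p,p) = p for all p) and anonymous (F(p,q) = F(q,p) for all p, q). In other words, there is no social choice function for 2 agents on the circle. -/

import Mathlib

open Complex Metric Set Finset

lemma exp_eq_exp_real {u v : ℝ} (h : Complex.exp (u * Complex.I) = Complex.exp (v * Complex.I)) :
    ∃ n : ℤ, u = v + n * (2 * Real.pi) := by
  rw [Complex.exp_eq_exp_iff_exists_int] at h
  obtain ⟨n, hn⟩ := h
  refine ⟨n, ?_⟩
  have h2 : (u : ℂ) * I = (v + n * (2 * Real.pi) : ℝ) * I := by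
    rw [hn]; push_cast; ring
  have h3 : (u : ℂ) = ((v + n * (2 * Real.pi) : ℝ) : ℂ) :=
    mul_right_cancel₀ Complex.I_ne_zero h2
  exact_mod_cast h3

lemma no_half_int (n k : ℤ) : (n : ℝ) ≠ (k : ℝ) + 1 / 2 := by
  intro h
  have : ((2 * n : ℤ) : ℝ) = ((2 * k + 1 : ℤ) : ℝ) := by push_cast; linarith
  have := Int.cast_injective (α := ℝ) this
  omega

lemma lift_sub_const {α : Type*} [TopologicalSpace α] {s : Set α} (hs : IsPreconnected s)
    {u v : α → ℝ} (hu : ContinuousOn u s) (hv : ContinuousOn v s)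
    (h : ∀ x ∈ s, Complex.exp (u x * Complex.I) = Complex.exp (v x * Complex.I))
    {x y : α} (hx : x ∈ s) (hy : y ∈ s) : u x - v x = u y - v y := by
  set d : α → ℝ := fun a => (u a - v a) / (2 * Real.pi) with hd
  have hπ : (0:ℝ) < 2 * Real.pi := by positivity
  have hdc : ContinuousOn d s := (hu.sub hv).div_const _
  have hint : ∀ a ∈ s, ∃ n : ℤ, d a = n := by
    intro a ha
    obtain ⟨n, hn⟩ := exp_eq_exp_real (h a ha)
    exact ⟨n, by rw [hd]; field_simp [hn]; linarith⟩
  have key : ∀ a ∈ s, ∀ b ∈ s, ¬ d a < d b := by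
    intro a ha b hb hab
    obtain ⟨na, hna⟩ := hint a ha
    obtain ⟨nb, hnb⟩ := hint b hb
    have hnanb : na < nb := by
      have : (na : ℝ) < nb := by rw [← hna, ← hnb]; exact hab
      exact_mod_cast this
    have ht : (na : ℝ) + 1/2 ∈ Icc (d a) (d b) := by
      constructor
      · rw [hna]; linarith
      · rw [hnb]
        have : (na : ℝ) + 1 ≤ nb := by exact_mod_cast hnanb
        linarith
    obtain ⟨z, hz, hdz⟩ := hs.intermediate_value ha hb hdc ht
    obtain ⟨m, hm⟩ := hint z hz
    exact no_half_int m na (by rw [← hm, hdz])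
  have hde : d x = d y := le_antisymm (not_lt.1 (key y hy x hx)) (not_lt.1 (key x hx y hy))
  have : (u x - v x) / (2 * Real.pi) = (u y - v y) / (2 * Real.pi) := hde
  field_simp at this
  linarith

set_option maxHeartbeats 1000000 in
/-- There is no 2-agent social choice function on the unit circle S¹ ⊆ ℝ²:
no continuous F : S¹ × S¹ → S¹ that is anonymous (F(p,q) = F(q,p)) and
unanimous (F(p,p) = p). -/
theorem stmt_3 :
    ¬ ∃ F : (Metric.sphere (0 : EuclideanSpace ℝ (Fin 2)) 1) ×
            (Metric.sphere (0 : EuclideanSpace ℝ (Fin 2)) 1) →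
            (Metric.sphere (0 : EuclideanSpace ℝ (Fin 2)) 1),
      Continuous F ∧
      (∀ p q, F (p, q) = F (q, p)) ∧
      (∀ p, F (p, p) = p) := by
  rintro ⟨F, hFc, hsym, hdiag⟩
  set Φ : ℂ ≃ₗᵢ[ℝ] EuclideanSpace ℝ (Fin 2) := Complex.orthonormalBasisOneI.repr with hΦ
  have hmem : ∀ x : ℝ, Φ (Complex.exp ((2 * Real.pi * x : ℝ) * Complex.I)) ∈
      Metric.sphere (0 : EuclideanSpace ℝ (Fin 2)) 1 := by
    intro x
    rw [mem_sphere_zero_iff_norm, Φ.norm_map,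
      Complex.norm_exp_ofReal_mul_I]
  set E : ℝ → (Metric.sphere (0 : EuclideanSpace ℝ (Fin 2)) 1) :=
    fun x => ⟨Φ (Complex.exp ((2 * Real.pi * x : ℝ) * Complex.I)), hmem x⟩ with hE
  have hEc : Continuous E := by
    apply Continuous.subtype_mk
    exact Φ.continuous.comp (Complex.continuous_exp.comp
      ((Complex.continuous_ofReal.comp ((continuous_const.mul continuous_id))).mul
        continuous_const))
  set f : ℝ × ℝ → ℂ := fun p => Φ.symm ((F (E p.1, E p.2) : EuclideanSpace ℝ (Fin 2))) with hf
  have hfc : Continuous f :=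
    Φ.symm.continuous.comp (continuous_subtype_val.comp
      (hFc.comp ((hEc.comp continuous_fst).prodMk (hEc.comp continuous_snd))))
  have hfabs : ∀ p, ‖f p‖ = 1 := by
    intro p
    have h1 : ((F (E p.1, E p.2) : EuclideanSpace ℝ (Fin 2))) ∈
        Metric.sphere (0 : EuclideanSpace ℝ (Fin 2)) 1 := (F (E p.1, E p.2)).2
    rw [mem_sphere_zero_iff_norm] at h1
    rw [hf]
    calc ‖Φ.symm ((F (E p.1, E p.2) : EuclideanSpace ℝ (Fin 2)))‖
        = ‖((F (E p.1, E p.2) : EuclideanSpace ℝ (Fin 2)))‖ := Φ.symm.norm_map _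
      _ = 1 := h1
  have hf0 : ∀ p, f p ≠ 0 := by
    intro p h
    have := hfabs p
    rw [h] at this
    simp at this
  have hfsym : ∀ x y : ℝ, f (x, y) = f (y, x) := by
    intro x y
    simp only [hf]
    rw [hsym]
  have hfdiag : ∀ x : ℝ, f (x, x) = Complex.exp ((2 * Real.pi * x : ℝ) * Complex.I) := by
    intro x
    simp only [hf]
    rw [hdiag]
    exact Φ.symm_apply_apply _
  have hEper : ∀ x : ℝ, E (x + 1) = E x := by
    intro x
    apply Subtype.ext
    show Φ _ = Φ _
    congr 1
    have : ((2 * Real.pi * (x + 1) : ℝ) : ℂ) * Complex.I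
        = ((2 * Real.pi * x : ℝ) : ℂ) * Complex.I + 2 * Real.pi * Complex.I := by
      push_cast; ring
    rw [this, Complex.exp_add, Complex.exp_two_pi_mul_I, mul_one]
  have hper1 : ∀ x y : ℝ, f (x + 1, y) = f (x, y) := by
    intro x y; simp only [hf]; rw [hEper]
  have hper2 : ∀ x y : ℝ, f (x, y + 1) = f (x, y) := by
    intro x y; simp only [hf]; rw [hEper]
  -- integer translations
  have hintper : ∀ (x y : ℝ) (a b : ℤ), f (x - a, y - b) = f (x, y) := by
    intro x y a b
    have p1 : Function.Periodic (fun t => f (t, y - b)) 1 := fun t => hper1 t (y - b)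
    have p2 : Function.Periodic (fun t => f (x, t)) 1 := fun t => hper2 x t
    calc f (x - a, y - b) = f (x, y - b) := by
          have := p1.sub_int_mul_eq (x := x) a
          simpa using this
      _ = f (x, y) := by
          have := p2.sub_int_mul_eq (x := y) b
          simpa using this
  -- uniform continuity constant
  obtain ⟨δ₀, hδ₀pos, hδ₀⟩ : ∃ δ > 0, ∀ p ∈ closedBall (0:ℝ×ℝ) 3, ∀ q ∈ closedBall (0:ℝ×ℝ) 3,
      dist p q < δ → dist (f p) (f q) < 2 := by
    have hc : UniformContinuousOn f (closedBall (0:ℝ×ℝ) 3) :=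
      (isCompact_closedBall _ _).uniformContinuousOn_of_continuous hfc.continuousOn
    exact Metric.uniformContinuousOn_iff.1 hc 2 (by norm_num)
  set δ : ℝ := min δ₀ 1 with hδdef
  have hδpos : 0 < δ := lt_min hδ₀pos one_pos
  have hδ1 : δ ≤ 1 := min_le_right _ _
  have hne : ∀ p q : ℝ × ℝ, dist p q < δ → f p ≠ -f q := by
    intro p q hpq hcontra
    set a : ℤ := ⌊p.1⌋ with ha
    set b : ℤ := ⌊p.2⌋ with hb
    set p' : ℝ × ℝ := (p.1 - a, p.2 - b) with hp'
    set q' : ℝ × ℝ := (q.1 - a, q.2 - b) with hq'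
    have hfp' : f p' = f p := by
      rw [hp']
      have := hintper p.1 p.2 a b
      simpa using this
    have hfq' : f q' = f q := by
      rw [hq']
      have := hintper q.1 q.2 a b
      simpa using this
    have hnp' : ‖p'‖ ≤ 1 := by
      rw [Prod.norm_def]
      have h1 : |p.1 - (a:ℝ)| ≤ 1 := by
        rw [ha, _root_.abs_of_nonneg (by linarith [Int.floor_le p.1])]
        linarith [Int.lt_floor_add_one p.1]
      have h2 : |p.2 - (b:ℝ)| ≤ 1 := by
        rw [hb, _root_.abs_of_nonneg (by linarith [Int.floor_le p.2])]
        linarith [Int.lt_floor_add_one p.2]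
      simp only [hp', Real.norm_eq_abs]
      exact max_le h1 h2
    have hdd : dist p' q' = dist p q := by
      rw [hp', hq', Prod.dist_eq, Prod.dist_eq]
      simp [Real.dist_eq, sub_sub_sub_cancel_right]
    have hnq' : ‖q'‖ ≤ 3 := by
      have hsub : q' - p' = q - p := by
        rw [hp', hq']
        ext <;> simp
      calc ‖q'‖ = ‖q' - p' + p'‖ := by rw [sub_add_cancel]
        _ ≤ ‖q' - p'‖ + ‖p'‖ := norm_add_le _ _
        _ ≤ dist q p + 1 := by
            rw [hsub, ← dist_eq_norm]
            linarith
        _ ≤ 3 := by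
            rw [dist_comm]
            have : dist p q < 1 := lt_of_lt_of_le hpq hδ1
            linarith
    have hp'mem : p' ∈ closedBall (0:ℝ×ℝ) 3 := by
      rw [mem_closedBall_zero_iff]; linarith
    have hq'mem : q' ∈ closedBall (0:ℝ×ℝ) 3 := by
      rw [mem_closedBall_zero_iff]; linarith
    have hlt : dist (f p') (f q') < 2 := by
      apply hδ₀ p' hp'mem q' hq'mem
      rw [hdd]
      exact lt_of_lt_of_le hpq (min_le_left _ _)
    rw [hfp', hfq', hcontra, dist_eq_norm] at hlt
    have : ‖-f q - f q‖ = 2 * ‖f q‖ := by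
      rw [show -f q - f q = -(2 * f q) by ring, norm_neg]
      simp
    rw [this, hfabs q] at hlt
    norm_num at hlt
  -- choose N
  obtain ⟨N, hN⟩ := exists_nat_gt (4 / δ)
  have hNpos : 0 < (N:ℝ) := lt_trans (by positivity) hN
  have hNne : (N:ℝ) ≠ 0 := ne_of_gt hNpos
  have h4N : 4 / (N:ℝ) < δ := by
    rw [div_lt_iff₀ hNpos]
    rw [div_lt_iff₀ hδpos] at hN
    linarith [mul_comm δ (N:ℝ)]
  -- the lift
  set A : ℝ × ℝ → ℕ → ℂ :=
    fun p k => f ((((k:ℝ)+1)/(N:ℝ)) • p) / f (((k:ℝ)/(N:ℝ)) • p) with hA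
  set g : ℝ × ℝ → ℝ := fun p => (∑ k ∈ Finset.range N, Complex.arg (A p k)) + Complex.arg (f 0)
    with hg
  have hAabs : ∀ p k, ‖A p k‖ = 1 := by
    intro p k
    rw [hA]
    simp only [norm_div, hfabs]
    norm_num
  have hAexp : ∀ p k, Complex.exp ((Complex.arg (A p k) : ℝ) * Complex.I) = A p k := by
    intro p k
    have := Complex.norm_mul_exp_arg_mul_I (A p k)
    rwa [hAabs, Complex.ofReal_one, one_mul] at this
  have hf0exp : Complex.exp ((Complex.arg (f 0) : ℝ) * Complex.I) = f 0 := by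
    have := Complex.norm_mul_exp_arg_mul_I (f 0)
    rwa [hfabs, Complex.ofReal_one, one_mul] at this
  have hkey : ∀ (p : ℝ × ℝ) (n : ℕ),
      Complex.exp ((∑ k ∈ Finset.range n, Complex.arg (A p k) : ℝ) * Complex.I)
        = f (((n:ℝ)/(N:ℝ)) • p) / f 0 := by
    intro p n
    induction n with
    | zero =>
      simp [div_self (hf0 0)]
    | succ n ih =>
      rw [Finset.sum_range_succ, Complex.ofReal_add, add_mul, Complex.exp_add, ih, hAexp]
      simp only [hA]
      have hnn : ((n:ℝ)+1) = ((n+1:ℕ):ℝ) := by push_cast; ring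
      rw [hnn]
      have h1 : f (((n:ℝ)/(N:ℝ)) • p) ≠ 0 := hf0 _
      have h2 : f 0 ≠ 0 := hf0 _
      field_simp
  have hgexp : ∀ p : ℝ × ℝ, Complex.exp ((g p : ℝ) * Complex.I) = f p := by
    intro p
    rw [hg]
    simp only
    rw [Complex.ofReal_add, add_mul, Complex.exp_add, hkey, hf0exp,
      div_self hNne, one_smul, div_mul_cancel₀ _ (hf0 0)]
  have hAslit : ∀ p ∈ ball (0:ℝ×ℝ) 4, ∀ k : ℕ, A p k ∈ Complex.slitPlane := by
    intro p hp k
    have hdistk : dist ((((k:ℝ)+1)/(N:ℝ)) • p) ((((k:ℝ))/(N:ℝ)) • p) < δ := by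
      rw [dist_eq_norm, ← sub_smul, norm_smul]
      have h1 : (((k:ℝ)+1)/(N:ℝ)) - ((k:ℝ)/(N:ℝ)) = 1/(N:ℝ) := by field_simp; ring
      rw [h1, Real.norm_eq_abs, abs_of_pos (by positivity)]
      have hpn : ‖p‖ < 4 := mem_ball_zero_iff.1 hp
      calc 1/(N:ℝ) * ‖p‖ ≤ 1/(N:ℝ) * 4 := by
            apply mul_le_mul_of_nonneg_left (le_of_lt hpn) (by positivity)
        _ = 4 / (N:ℝ) := by ring
        _ < δ := h4N
    have hAne : A p k ≠ -1 := by
      intro hcon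
      rw [hA] at hcon
      simp only at hcon
      rw [div_eq_iff (hf0 _)] at hcon
      have : f ((((k:ℝ)+1)/(N:ℝ)) • p) = -f (((k:ℝ)/(N:ℝ)) • p) := by
        rw [hcon]; ring
      exact hne _ _ hdistk this
    by_contra hnot
    rw [Complex.mem_slitPlane_iff] at hnot
    push_neg at hnot
    obtain ⟨hre, him⟩ := hnot
    have hz : A p k = ((A p k).re : ℂ) := Complex.ext rfl (by simp [him])
    have habs : |(A p k).re| = 1 := by
      have := hAabs p k
      rw [hz, Complex.norm_real, Real.norm_eq_abs] at this
      exact this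
    have : (A p k).re = -1 := by
      rcases abs_eq (by norm_num : (0:ℝ) ≤ 1) |>.1 habs with h | h
      · linarith
      · exact h
    apply hAne
    rw [hz, this]
    norm_num
  have hgc : ∀ p ∈ ball (0:ℝ×ℝ) 4, ContinuousAt g p := by
    intro p hp
    have hterm : ∀ k : ℕ, ContinuousAt (fun q => Complex.arg (A q k)) p := by
      intro k
      have hA_cont : ContinuousAt (fun q => A q k) p := by
        apply ContinuousAt.div
        · exact (hfc.comp (continuous_const_smul _)).continuousAt
        · exact (hfc.comp (continuous_const_smul _)).continuousAt
        · exact hf0 _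
      exact Filter.Tendsto.comp (Complex.continuousAt_arg (hAslit p hp k)) hA_cont
    have hsum : ContinuousAt (fun q => ∑ k ∈ Finset.range N, Complex.arg (A q k)) p :=
      tendsto_finset_sum _ (fun k _ => hterm k)
    exact hsum.add continuousAt_const
  clear hkey hAabs hAexp hf0exp hAslit hne hδ₀ hintper
  clear hA hg hf hE hΦ
  clear_value A g f E Φ
  -- membership facts
  have hdiagmem : ∀ t ∈ Icc (0:ℝ) 1, ((t, t) : ℝ × ℝ) ∈ ball (0:ℝ×ℝ) 4 := by
    intro t ht
    rw [mem_ball_zero_iff, Prod.norm_def]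
    simp only [Real.norm_eq_abs]
    have : |t| ≤ 1 := abs_le.2 ⟨by linarith [ht.1], ht.2⟩
    rw [max_self]
    linarith
  have hvertmem : ∀ (c : ℝ), c ∈ Icc (0:ℝ) 1 → ∀ t ∈ Icc (0:ℝ) 1,
      ((c, t) : ℝ × ℝ) ∈ ball (0:ℝ×ℝ) 4 := by
    intro c hc t ht
    rw [mem_ball_zero_iff, Prod.norm_def]
    simp only [Real.norm_eq_abs]
    have h1 : |c| ≤ 1 := abs_le.2 ⟨by linarith [hc.1], hc.2⟩
    have h2 : |t| ≤ 1 := abs_le.2 ⟨by linarith [ht.1], ht.2⟩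
    have := max_le h1 h2
    linarith
  have h01 : (0:ℝ) ∈ Icc (0:ℝ) 1 := by norm_num
  have h11 : (1:ℝ) ∈ Icc (0:ℝ) 1 := by norm_num
  have hf10 : ∀ y : ℝ, f (1, y) = f (0, y) := by
    intro y
    have := hper1 0 y
    rwa [zero_add] at this
  -- step 1: diagonal
  have step1 : g (1, 1) - 2 * Real.pi * 1 = g (0, 0) - 2 * Real.pi * 0 := by
    apply lift_sub_const (isPreconnected_Icc (a := (0:ℝ)) (b := 1))
      (u := fun t => g (t, t)) (v := fun t => 2 * Real.pi * t) ?_ ?_ ?_ h11 h01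
    · intro t ht
      have hc : ContinuousAt (fun t : ℝ => ((t, t) : ℝ × ℝ)) t :=
        (continuous_id.prodMk continuous_id).continuousAt
      exact (ContinuousAt.continuousWithinAt (Filter.Tendsto.comp (hgc (t, t) (hdiagmem t ht)) hc))
    · exact (continuous_const.mul continuous_id).continuousOn
    · intro t ht
      rw [hgexp, hfdiag]
  -- step 2: vertical
  have step2 : g (1, 1) - g (0, 1) = g (1, 0) - g (0, 0) := by
    apply lift_sub_const (isPreconnected_Icc (a := (0:ℝ)) (b := 1))
      (u := fun t => g (1, t)) (v := fun t => g (0, t)) ?_ ?_ ?_ h11 h01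
    · intro t ht
      exact ((hgc (1, t) (hvertmem 1 h11 t ht)).comp
        (continuous_const.prodMk continuous_id).continuousAt).continuousWithinAt
    · intro t ht
      exact ((hgc (0, t) (hvertmem 0 h01 t ht)).comp
        (continuous_const.prodMk continuous_id).continuousAt).continuousWithinAt
    · intro t ht
      rw [hgexp, hgexp, hf10]
  -- step 3: symmetry
  have step3 : g (1, 0) - g (0, 1) = g (0, 1) - g (1, 0) := by
    have hballmem : ∀ z : ℝ × ℝ, z ∈ ball (0:ℝ×ℝ) 4 → z.swap ∈ ball (0:ℝ×ℝ) 4 := by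
      intro z hz
      rw [mem_ball_zero_iff] at hz ⊢
      rw [Prod.norm_def] at hz ⊢
      rw [Prod.fst_swap, Prod.snd_swap, max_comm]
      exact hz
    have h10 : ((1:ℝ), (0:ℝ)) ∈ ball (0:ℝ×ℝ) 4 := hvertmem 1 h11 0 h01
    have h01' : ((0:ℝ), (1:ℝ)) ∈ ball (0:ℝ×ℝ) 4 := hvertmem 0 h01 1 h11
    have := lift_sub_const ((convex_ball (0:ℝ×ℝ) 4).isPreconnected)
      (u := g) (v := fun z => g z.swap) ?_ ?_ ?_ h10 h01'
    · simpa using this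
    · intro z hz
      exact (hgc z hz).continuousWithinAt
    · intro z hz
      exact ((hgc z.swap (hballmem z hz)).comp continuous_swap.continuousAt).continuousWithinAt
    · intro z hz
      rw [hgexp, hgexp]
      have := hfsym z.1 z.2
      simpa [Prod.swap] using this
  -- integrality
  have hex : Complex.exp ((g (1, 0) : ℝ) * Complex.I) = Complex.exp ((g (0, 0) : ℝ) * Complex.I) := by
    rw [hgexp, hgexp, hf10]
  obtain ⟨n, hn⟩ := exp_eq_exp_real hex
  -- final contradiction
  have hsum : 2 * Real.pi = 2 * ((n:ℝ) * (2 * Real.pi)) := by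
    have e1 : g (1, 1) = g (0, 0) + 2 * Real.pi := by linarith
    have e2 : g (0, 1) = g (1, 0) := by linarith
    have e3 : g (1, 0) = g (0, 0) + (n:ℝ) * (2 * Real.pi) := hn
    linarith
  have h2n : ((2 * n : ℤ) : ℝ) = 1 := by
    have hne2π : (2 * Real.pi : ℝ) ≠ 0 := by positivity
    have h' : ((2 * n : ℤ) : ℝ) * (2 * Real.pi) = 1 * (2 * Real.pi) := by push_cast; linarith
    have := mul_right_cancel₀ hne2π h'
    linarith
  have : (2 * n : ℤ) = 1 := by exact_mod_cast h2n
  omega
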